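/- arXiv:2307.15415 — 4 statements merged into one kernel-verified Lean document; each statement's English description precedes it below -/
import Mathlib

section
/- Let α > −1, n ≥ 1, λ_n^L = m(n)/m(n−1), and suppose m(j)/m(j−1) ≠ m(n)/m(n−1) for 1 ≤ j ≤ n−1. If y(x) = ∑_{p≥0} (a_p/m(p)) x^p is a formal power series solution of x ∂_m² y + (α+1−x) ∂_m y + λ_n^L y = 0, then the coefficients satisfy (α+1) a_1 = −λ_n^L a_0 and a_{p+1}/m(p+1) = [ (m(p)/m(p+1)) · (m(p)/m(p−1) − λ_n^L) / (m(p)/m(p−1) + α + 1) ] · a_p/m(p) for p ≥ 1; consequently a_j = 0 for all j ≥ n+1, so y is a polynomial of degree at most n. -/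
open PowerSeries

/-- The moment derivative associated to a sequence `m`. -/
noncomputable def mderiv (m : ℕ → ℝ) (f : PowerSeries ℂ) : PowerSeries ℂ :=
  PowerSeries.mk fun p => ((m (p + 1) / m p : ℝ) : ℂ) * PowerSeries.coeff (p + 1) f

/-- Any formal power series solution of the generalized Laguerre moment equation satisfies the
stated recurrence, and is in fact a polynomial of degree at most `n`. -/
theorem stmt4 (m : ℕ → ℝ) (hm : ∀ p, 0 < m p) (hm0 : m 0 = 1)
    (α : ℝ) (hα : -1 < α) (n : ℕ) (hn : 1 ≤ n)
    (hne : ∀ j, 1 ≤ j → j ≤ n - 1 → m j / m (j - 1) ≠ m n / m (n - 1))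
    (a : ℕ → ℂ) (y : PowerSeries ℂ)
    (hy : y = PowerSeries.mk fun p => a p / (m p : ℂ))
    (heq : (X : PowerSeries ℂ) * mderiv m (mderiv m y)
      + (C ((α : ℂ) + 1) - X) * mderiv m y
      + C ((m n / m (n - 1) : ℝ) : ℂ) * y = 0) :
    ((α : ℂ) + 1) * a 1 = -((m n / m (n - 1) : ℝ) : ℂ) * a 0 ∧
    (∀ p : ℕ, 1 ≤ p →
      a (p + 1) / (m (p + 1) : ℂ) =
        ((m p / m (p + 1) : ℝ) : ℂ) *
          (((m p / m (p - 1) - m n / m (n - 1) : ℝ) : ℂ) /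
            ((m p / m (p - 1) + α + 1 : ℝ) : ℂ)) * (a p / (m p : ℂ))) ∧
    (∀ j, n + 1 ≤ j → a j = 0) := by
  have hmne : ∀ p, (m p : ℂ) ≠ 0 := fun p => by
    exact_mod_cast Complex.ofReal_ne_zero.mpr (hm p).ne'
  have hmR : ∀ p, m p ≠ 0 := fun p => (hm p).ne'
  have hcy : ∀ p, coeff p y = a p / (m p : ℂ) := by
    intro p; rw [hy]; simp
  have hcD : ∀ p, coeff p (mderiv m y) = ((m (p+1):ℝ):ℂ)/((m p :ℝ):ℂ) * (a (p+1) / (m (p+1):ℂ)) := by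
    intro p; rw [mderiv]; simp [hcy]
  have hcD2 : ∀ p, coeff p (mderiv m (mderiv m y)) =
      ((m (p+1):ℝ):ℂ)/((m p:ℝ):ℂ) * (((m (p+2):ℝ):ℂ)/((m (p+1):ℝ):ℂ) * (a (p+2) / (m (p+2):ℂ))) := by
    intro p; rw [mderiv]
    simp only [coeff_mk, hcD]
    push_cast; ring
  have h0 := congrArg (coeff 0) heq
  simp only [map_add, sub_mul, map_sub, add_mul, coeff_C_mul, coeff_zero_X_mul, hcD, hcD2, hcy,
    map_zero, zero_add, sub_zero, add_zero, one_mul] at h0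
  have part1 : ((α : ℂ) + 1) * a 1 = -((m n / m (n - 1) : ℝ) : ℂ) * a 0 := by
    rw [hm0] at h0
    push_cast at h0 ⊢
    field_simp [hmne] at h0 ⊢
    linear_combination h0
  have hdne : ∀ p : ℕ, ((m (p+1) / m p + α + 1 : ℝ) : ℂ) ≠ 0 := by
    intro p
    have : (0:ℝ) < m (p+1) / m p + α + 1 := by
      have := div_pos (hm (p+1)) (hm p); linarith
    exact_mod_cast Complex.ofReal_ne_zero.mpr this.ne'
  have part2 : ∀ p : ℕ, 1 ≤ p →
      a (p + 1) / (m (p + 1) : ℂ) =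
        ((m p / m (p + 1) : ℝ) : ℂ) *
          (((m p / m (p - 1) - m n / m (n - 1) : ℝ) : ℂ) /
            ((m p / m (p - 1) + α + 1 : ℝ) : ℂ)) * (a p / (m p : ℂ)) := by
    intro p hp
    obtain ⟨j, rfl⟩ : ∃ j, p = j + 1 := ⟨p - 1, (Nat.succ_pred_eq_of_pos hp).symm⟩
    have h := congrArg (coeff (j+1)) heq
    simp only [map_add, sub_mul, map_sub, add_mul, coeff_C_mul, coeff_succ_X_mul, hcD, hcD2, hcy,
      map_zero, one_mul] at h
    have hd' : ((m (j+1) : ℝ):ℂ) + (α:ℂ) * ((m j :ℝ):ℂ) + ((m j:ℝ):ℂ) ≠ 0 := by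
      have : (0:ℝ) < m (j+1) + α * m j + m j := by nlinarith [hm j, hm (j+1)]
      exact_mod_cast Complex.ofReal_ne_zero.mpr this.ne'
    have hdc : ((m (j+1):ℝ):ℂ)/((m j:ℝ):ℂ) + (α:ℂ) + 1 ≠ 0 := by
      have := hdne j; push_cast at this; exact this
    have hr2 : ((m (j+2):ℝ):ℂ)/((m (j+1):ℝ):ℂ) ≠ 0 := div_ne_zero (hmne _) (hmne _)
    have hkey : (((m (j+1):ℝ):ℂ)/((m j:ℝ):ℂ) + (α:ℂ) + 1) * (((m (j+2):ℝ):ℂ)/((m (j+1):ℝ):ℂ))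
          * (a (j+2) / ((m (j+2):ℝ):ℂ))
        = (((m (j+1):ℝ):ℂ)/((m j:ℝ):ℂ) - ((m n:ℝ):ℂ)/((m (n-1):ℝ):ℂ)) * (a (j+1) / ((m (j+1):ℝ):ℂ)) := by
      push_cast at h
      linear_combination h
    have hA2 : a (j+2) / ((m (j+2):ℝ):ℂ)
        = ((((m (j+1):ℝ):ℂ)/((m j:ℝ):ℂ) - ((m n:ℝ):ℂ)/((m (n-1):ℝ):ℂ)) * (a (j+1) / ((m (j+1):ℝ):ℂ)))
          / ((((m (j+1):ℝ):ℂ)/((m j:ℝ):ℂ) + (α:ℂ) + 1) * (((m (j+2):ℝ):ℂ)/((m (j+1):ℝ):ℂ))) := by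
      rw [eq_div_iff (mul_ne_zero hdc hr2)]
      linear_combination hkey
    simp only [Nat.add_sub_cancel]
    rw [show j + 1 + 1 = j + 2 from rfl, hA2, ← div_div, div_div_eq_mul_div]
    push_cast
    ring
  refine ⟨part1, part2, ?_⟩
  have hzero : ∀ k : ℕ, a (n + 1 + k) = 0 := by
    intro k
    induction k with
    | zero =>
      have h := part2 n hn
      rw [sub_self] at h
      simp only [Complex.ofReal_zero, zero_div, mul_zero, zero_mul] at h
      exact (div_eq_zero_iff.mp h).resolve_right (hmne _)
    | succ k ih =>
      have h := part2 (n + 1 + k) (by omega)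
      rw [show n + 1 + k = n + 1 + k from rfl, ih] at h
      simp only [zero_div, mul_zero] at h
      have : a (n + 1 + k + 1) = 0 := (div_eq_zero_iff.mp h).resolve_right (hmne _)
      simpa [show n + 1 + (k+1) = n + 1 + k + 1 from rfl] using this
  intro j hj
  obtain ⟨k, rfl⟩ : ∃ k, j = n + 1 + k := ⟨j - (n+1), by omega⟩
  exact hzero k
end

section
/- Let n ≥ 1 be odd and λ_n^H = 2m(n)/m(n−1). Then the polynomial y(x) = ∑_{k=0}^{(n−1)/2} (a_{2k+1}/m(2k+1)) x^{2k+1}, with a_1 = 1 and a_{2k+1} = (m(2k+1)/m(1)) ∏_{j=0}^{k−1} ( m(2j+1)(2m(2j+1)/m(2j) − λ_n^H) / m(2j+3) ) for k ≥ 1, is an odd polynomial solving ∂_m² y − 2x ∂_m y + λ_n^H y = 0. -/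
open PowerSeries Finset

/-- For odd `n ≥ 1`, the odd generalized Hermite polynomial solves
`∂_m² y - 2x ∂_m y + λ_n^H y = 0`, `λ_n^H = 2 m(n)/m(n-1)`. -/
theorem stmt7 (m : ℕ → ℝ) (hm : ∀ p, 0 < m p) (hm0 : m 0 = 1)
    (n : ℕ) (hn : 1 ≤ n) (hodd : Odd n)
    (b : ℕ → ℝ) (hb0 : b 0 = 1)
    (hbk : ∀ k, 1 ≤ k → b k =
      (m (2 * k + 1) / m 1) *
        ∏ j ∈ Finset.Icc 0 (k - 1),
          (m (2 * j + 1) * (2 * m (2 * j + 1) / m (2 * j) - 2 * m n / m (n - 1)) / m (2 * j + 3)))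
    (y : PowerSeries ℂ)
    (hy : y = PowerSeries.mk fun p =>
      if p % 2 = 1 ∧ p ≤ n then ((b (p / 2) / m p : ℝ) : ℂ) else 0) :
    mderiv m (mderiv m y) - 2 * (X : PowerSeries ℂ) * mderiv m y
        + C ((2 * m n / m (n - 1) : ℝ) : ℂ) * y = 0 ∧
    (∀ p, Even p → PowerSeries.coeff p y = 0) := by
  have hmne : ∀ p, (m p : ℝ) ≠ 0 := fun p => (hm p).ne'
  have hmc : ∀ p, ((m p : ℝ) : ℂ) ≠ 0 := fun p => by
    exact_mod_cast Complex.ofReal_ne_zero.mpr (hmne p)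
  constructor
  · -- recurrence for b
    have hrec : ∀ k, b (k + 1) = b k * (2 * m (2 * k + 1) / m (2 * k) - 2 * m n / m (n - 1)) := by
      intro k
      cases k with
      | zero =>
        rw [hbk 1 le_rfl, hb0]
        simp only [Nat.sub_self, Finset.Icc_self, Finset.prod_singleton]
        rw [hm0]
        field_simp [hmne]
      | succ k =>
        rw [hbk (k + 2) (by omega), hbk (k + 1) (by omega)]
        have h1 : (k + 2) - 1 = k + 1 := rfl
        have h2 : (k + 1) - 1 = k := rfl
        rw [h1, h2, Finset.prod_Icc_succ_top (Nat.zero_le _)]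
        have e : 2 * (k + 1) + 3 = 2 * (k + 2) + 1 := by ring
        rw [e]
        have key : ∀ (A B M1 Q t : ℝ), A ≠ 0 → M1 ≠ 0 →
            A / M1 * (Q * (B * t / A)) = B / M1 * Q * t := by
          intro A B M1 Q t hA hM1
          field_simp
        exact key _ _ _ _ _ (hmne _) (hmne 1)
    have h2C : (2 : PowerSeries ℂ) * (X : PowerSeries ℂ) * mderiv m y
        = C 2 * ((X : PowerSeries ℂ) * mderiv m y) := by
      rw [mul_assoc, map_ofNat]
    ext p
    rw [map_zero, map_add, map_sub, h2C, PowerSeries.coeff_C_mul, PowerSeries.coeff_C_mul]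
    rcases p with _ | q
    · -- p = 0
      simp only [mderiv, hy, PowerSeries.coeff_mk, PowerSeries.coeff_zero_eq_constantCoeff,
        map_mul, constantCoeff_X, zero_mul, mul_zero]
      norm_num
    · rw [PowerSeries.coeff_succ_X_mul]
      simp only [mderiv, hy, PowerSeries.coeff_mk]
      rcases Nat.even_or_odd (q + 1) with hpar | hpar
      · -- even index: all coefficients vanish
        have h1 : ¬((q + 1) % 2 = 1 ∧ q + 1 ≤ n) := by
          rw [Nat.even_iff] at hpar; omega
        have h2 : ¬((q + 1 + 1 + 1) % 2 = 1 ∧ q + 1 + 1 + 1 ≤ n) := by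
          rw [Nat.even_iff] at hpar; omega
        simp [h1, h2, show ¬((q + 1) % 2 = 1 ∧ q < n) by rw [Nat.even_iff] at hpar; omega,
          show ¬((q + 1 + 1 + 1) % 2 = 1 ∧ q + 1 + 1 < n) by rw [Nat.even_iff] at hpar; omega]
      · -- odd index
        rw [Nat.odd_iff] at hpar
        by_cases hle : q + 3 ≤ n
        · -- interior case
          have h1 : ((q + 1) % 2 = 1 ∧ q + 1 ≤ n) := ⟨hpar, by omega⟩
          have h2 : ((q + 1 + 1 + 1) % 2 = 1 ∧ q + 1 + 1 + 1 ≤ n) := ⟨by omega, by omega⟩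
          rw [if_pos h1, if_pos h2]
          obtain ⟨k, hk⟩ : ∃ k, q = 2 * k := ⟨q / 2, by omega⟩
          have hd1 : (q + 1 + 1 + 1) / 2 = k + 1 := by omega
          have hd2 : (q + 1) / 2 = k := by omega
          rw [hd1, hd2, hrec k]
          have e1 : 2 * k + 1 = q + 1 := by omega
          have e2 : 2 * k = q := by omega
          rw [e1, e2]
          have key : ∀ (A B Cc D E Mn bk : ℝ), A ≠ 0 → B ≠ 0 → Cc ≠ 0 → D ≠ 0 → E ≠ 0 →
              B / A * (Cc / B * (bk * (2 * A / D - 2 * Mn / E) / Cc))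
                - 2 * (A / D * (bk / A)) + 2 * Mn / E * (bk / A) = 0 := by
            intro A B Cc D E Mn bk hA hB hC hD hE
            field_simp
            ring
          have real_id := key (m (q + 1)) (m (q + 1 + 1)) (m (q + 1 + 1 + 1)) (m q)
            (m (n - 1)) (m n) (b k) (hmne _) (hmne _) (hmne _) (hmne _) (hmne _)
          exact_mod_cast real_id
        · -- boundary / beyond
          have h2 : ¬((q + 1 + 1 + 1) % 2 = 1 ∧ q + 1 + 1 + 1 ≤ n) := by omega
          rw [if_neg h2]
          by_cases hle' : q + 1 ≤ n
          · -- then q + 1 = n (parity)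
            have hne : q + 1 = n := by
              rw [Nat.odd_iff] at hodd; omega
            have h1 : ((q + 1) % 2 = 1 ∧ q + 1 ≤ n) := ⟨hpar, hle'⟩
            rw [if_pos h1, show n = q + 1 from hne.symm]
            simp only [Nat.add_sub_cancel]
            push_cast
            field_simp [hmc]
            ring
          · have h1 : ¬((q + 1) % 2 = 1 ∧ q + 1 ≤ n) := by omega
            simp [h1, show ¬((q + 1) % 2 = 1 ∧ q < n) by omega]
  · intro p hp
    rw [Nat.even_iff] at hp
    have : ¬(p % 2 = 1 ∧ p ≤ n) := by omega
    simp [hy, this]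
end

section
/- Let α, β > −1, n ≥ 2, and λ_n^J = (m(n)/m(n−1))·(m(n−1)/m(n−2) + α + β + 2). If y(x) = ∑_{p≥0} (a_p/m(p)) x^p is a formal solution of (1 − x²) ∂_m² y + [β − α − (α+β+2)x] ∂_m y + λ_n^J y = 0, then a_2 = −(β−α)a_1 − λ_n^J a_0, a_3 = [m(1)(α+β+2) + (β−α)² − λ_n^J] a_1 + λ_n^J (β−α) a_0, and for p ≥ 2, a_{p+2}/m(p+2) = [ (m(p)/m(p+2)) ( (m(p)/m(p−1))(m(p−1)/m(p−2) + α+β+2) − λ_n^J ) ] a_p/m(p) − [ (β−α) m(p+1)/m(p+2) ] a_{p+1}/m(p+1). In particular, if a_0, a_1 are chosen so that a_{n+1} = 0, then a_p = 0 for all p ≥ n+1 and y is a polynomial of degree at most n. -/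
open PowerSeries

/-- Formal solutions of the generalized Jacobi moment differential equation satisfy the
stated three-term recurrence; if moreover `a (n+1) = 0` then `a p = 0` for all `p ≥ n+1`. -/
theorem stmt8 (m : ℕ → ℝ) (hm : ∀ p, 0 < m p) (hm0 : m 0 = 1)
    (α β : ℝ) (hα : -1 < α) (hβ : -1 < β) (n : ℕ) (hn : 2 ≤ n)
    (a : ℕ → ℂ) (y : PowerSeries ℂ)
    (hy : y = PowerSeries.mk fun p => a p / (m p : ℂ))
    (heq : (1 - (X : PowerSeries ℂ) ^ 2) * mderiv m (mderiv m y)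
      + (C ((β : ℂ) - α) - C ((α : ℂ) + β + 2) * X) * mderiv m y
      + C (((m n / m (n - 1)) * (m (n - 1) / m (n - 2) + α + β + 2) : ℝ) : ℂ) * y = 0) :
    a 2 = -((β : ℂ) - α) * a 1
        - (((m n / m (n - 1)) * (m (n - 1) / m (n - 2) + α + β + 2) : ℝ) : ℂ) * a 0 ∧
    a 3 = (((m 1 * (α + β + 2) + (β - α) ^ 2
          - (m n / m (n - 1)) * (m (n - 1) / m (n - 2) + α + β + 2) : ℝ)) : ℂ) * a 1
        + (((m n / m (n - 1)) * (m (n - 1) / m (n - 2) + α + β + 2) : ℝ) : ℂ) * ((β : ℂ) - α) * a 0 ∧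
    (∀ p, 2 ≤ p →
      a (p + 2) / (m (p + 2) : ℂ) =
        ((m p / m (p + 2) * ((m p / m (p - 1)) * (m (p - 1) / m (p - 2) + α + β + 2)
            - (m n / m (n - 1)) * (m (n - 1) / m (n - 2) + α + β + 2)) : ℝ) : ℂ) *
          (a p / (m p : ℂ))
        - (((β - α) * (m (p + 1) / m (p + 2)) : ℝ) : ℂ) * (a (p + 1) / (m (p + 1) : ℂ))) ∧
    (a (n + 1) = 0 → ∀ p, n + 1 ≤ p → a p = 0) := by
  have hmz : ∀ p, (m p : ℂ) ≠ 0 := fun p => by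
    exact_mod_cast Complex.ofReal_ne_zero.2 (hm p).ne'
  have hA : ∀ (p : ℕ) (x : ℂ), ((m (p+1) : ℂ)/(m p : ℂ)) * (x / (m (p+1) : ℂ)) = x / (m p : ℂ) := by
    intro p x
    rw [div_mul_div_comm, mul_comm ((m p : ℂ)), mul_div_mul_left _ _ (hmz (p+1))]
  obtain ⟨s, hs⟩ : ∃ s:ℂ, ((α:ℂ)+β+2 : ℂ) = s := ⟨_, rfl⟩
  obtain ⟨t, ht⟩ : ∃ t:ℂ, ((β:ℂ)-α : ℂ) = t := ⟨_, rfl⟩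
  obtain ⟨l, hl⟩ : ∃ l:ℂ, (((m n / m (n - 1)) * (m (n - 1) / m (n - 2) + α + β + 2) : ℝ) : ℂ) = l := ⟨_, rfl⟩
  rw [hs, ht, hl] at heq
  have h0 := congrArg (coeff 0) heq
  have h1 := congrArg (coeff 1) heq
  have h2 := fun q : ℕ => congrArg (coeff (q+2)) heq
  simp only [hy, mderiv, coeff_mk, sub_mul, one_mul, mul_assoc, map_add, map_sub, map_zero,
    coeff_X_pow_mul, coeff_X_pow_mul', coeff_succ_X_mul, coeff_C_mul,
    coeff_zero_eq_constantCoeff, constantCoeff_X] at h0 h1 h2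
  norm_num at h0 h1
  push_cast at h0 h1 h2
  simp only [hA] at h0 h1 h2
  simp only [hm0, Complex.ofReal_one, div_one] at h0 h1 h2
  -- part 1
  have P1 : a 2 = -((β : ℂ) - α) * a 1
      - (((m n / m (n - 1)) * (m (n - 1) / m (n - 2) + α + β + 2) : ℝ) : ℂ) * a 0 := by
    rw [ht, hl]
    linear_combination h0
  -- part 2
  have P2 : a 3 = (((m 1 * (α + β + 2) + (β - α) ^ 2
        - (m n / m (n - 1)) * (m (n - 1) / m (n - 2) + α + β + 2) : ℝ)) : ℂ) * a 1
      + (((m n / m (n - 1)) * (m (n - 1) / m (n - 2) + α + β + 2) : ℝ) : ℂ) * ((β : ℂ) - α) * a 0 := by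
    rw [hl, ht]
    push_cast
    rw [hs, ht]
    push_cast at hl
    rw [hl]
    have P1' : a 2 = -t * a 1 - l * a 0 := by linear_combination h0
    field_simp [hmz] at h1
    linear_combination h1 - (↑(m 1) * t) * P1' + ((↑(m 1)-1) * t) * h0
  -- part 3
  have P3 : ∀ p, 2 ≤ p →
      a (p + 2) / (m (p + 2) : ℂ) =
        ((m p / m (p + 2) * ((m p / m (p - 1)) * (m (p - 1) / m (p - 2) + α + β + 2)
            - (m n / m (n - 1)) * (m (n - 1) / m (n - 2) + α + β + 2)) : ℝ) : ℂ) *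
          (a p / (m p : ℂ))
        - (((β - α) * (m (p + 1) / m (p + 2)) : ℝ) : ℂ) * (a (p + 1) / (m (p + 1) : ℂ)) := by
    intro p hp
    obtain ⟨q, rfl⟩ : ∃ q, p = q + 2 := ⟨p - 2, by omega⟩
    have hq2 : q + 2 - 1 = q + 1 := by omega
    have hq1 : q + 2 - 2 = q := by omega
    rw [hq2, hq1]
    push_cast
    rw [show ((β:ℂ) - α) = t from ht]
    push_cast at hl
    rw [hl]
    have h := h2 q
    rw [← hs] at h
    push_cast at h
    simp only [show q+2+1+1 = q+4 from rfl, show q+2+2 = q+4 from rfl,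
      show q+2+1 = q+3 from rfl, show q+1+1 = q+2 from rfl] at h ⊢
    field_simp [hmz] at h ⊢
    linear_combination h
  refine ⟨P1, P2, P3, ?_⟩
  -- part 4
  intro han1
  have hstep : ∀ p, 2 ≤ p → a p = 0 → a (p+1) = 0 → a (p+2) = 0 := by
    intro p hp h0' h1'
    have := P3 p hp
    rw [h0', h1'] at this
    simp at this
    rcases this with h | h
    · exact h
    · exact absurd h (hm (p+2)).ne'
  have han2 : a (n + 2) = 0 := by
    have := P3 n hn
    rw [han1] at this
    simp [sub_self] at this
    rcases this with h | h
    · exact h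
    · exact absurd h (hm (n+2)).ne'
  have key : ∀ k, a (n + 1 + k) = 0 ∧ a (n + 2 + k) = 0 := by
    intro k
    induction k with
    | zero => exact ⟨han1, han2⟩
    | succ k ih =>
      refine ⟨by rw [show n+1+(k+1) = n+2+k by ring]; exact ih.2, ?_⟩
      have := hstep (n+1+k) (by omega) ih.1 (by rw [show n+1+k+1 = n+2+k by ring]; exact ih.2)
      rw [show n+2+(k+1) = n+1+k+2 by ring]
      exact this
  intro p hp
  obtain ⟨k, rfl⟩ : ∃ k, p = n + 1 + k := ⟨p - (n+1), by omega⟩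
  exact (key k).1
end

section
/- For n ≥ 2, set λ_n^B = (m(n)/m(n−1))·(m(n−1)/m(n−2) + 2). If y(x) = ∑_{p≥0} (a_p/m(p)) x^p is a formal solution of x² ∂_m² y + 2(x+1) ∂_m y − λ_n^B y = 0, then a_1 = (λ_n^B/2) a_0, a_2 = (λ_n^B/4)(λ_n^B − 2m(1)) a_0, and for p ≥ 2, a_{p+1}/m(p+1) = [ (λ_n^B − (m(p)/m(p−1))(m(p−1)/m(p−2) + 2)) / (2 m(p+1)/m(p)) ] · a_p/m(p); in particular a_j = 0 for all j ≥ n+1 and y is a polynomial of degree at most n. -/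
open PowerSeries

/-- Formal solutions of the generalized Bessel moment equation satisfy the stated recurrence
and are polynomials of degree at most `n`. -/
theorem stmt9 (m : ℕ → ℝ) (hm : ∀ p, 0 < m p) (hm0 : m 0 = 1)
    (n : ℕ) (hn : 2 ≤ n)
    (a : ℕ → ℂ) (y : PowerSeries ℂ)
    (hy : y = PowerSeries.mk fun p => a p / (m p : ℂ))
    (heq : (X : PowerSeries ℂ) ^ 2 * mderiv m (mderiv m y)
      + 2 * ((X : PowerSeries ℂ) + 1) * mderiv m y
      - C (((m n / m (n - 1)) * (m (n - 1) / m (n - 2) + 2) : ℝ) : ℂ) * y = 0) :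
    a 1 = (((m n / m (n - 1)) * (m (n - 1) / m (n - 2) + 2) / 2 : ℝ) : ℂ) * a 0 ∧
    a 2 = (((m n / m (n - 1)) * (m (n - 1) / m (n - 2) + 2) / 4 *
        ((m n / m (n - 1)) * (m (n - 1) / m (n - 2) + 2) - 2 * m 1) : ℝ) : ℂ) * a 0 ∧
    (∀ p, 2 ≤ p →
      a (p + 1) / (m (p + 1) : ℂ) =
        ((((m n / m (n - 1)) * (m (n - 1) / m (n - 2) + 2)
            - (m p / m (p - 1)) * (m (p - 1) / m (p - 2) + 2)) /
          (2 * m (p + 1) / m p) : ℝ) : ℂ) * (a p / (m p : ℂ))) ∧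
    (∀ j, n + 1 ≤ j → a j = 0) := by
  have hmz : ∀ p, (m p : ℂ) ≠ 0 := fun p => by
    exact_mod_cast Complex.ofReal_ne_zero.mpr (hm p).ne'
  have hmz' : ∀ p, m p ≠ 0 := fun p => (hm p).ne'
  set lamR : ℝ := (m n / m (n - 1)) * (m (n - 1) / m (n - 2) + 2) with hlamR
  set f1 := mderiv m y with hf1
  set f2 := mderiv m f1 with hf2
  have hcy : ∀ p, coeff p y = a p / (m p : ℂ) := by
    intro p; rw [hy]; simp
  have hc1 : ∀ p, coeff p f1 = ((m (p+1) / m p : ℝ) : ℂ) * (a (p+1) / (m (p+1) : ℂ)) := by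
    intro p; rw [hf1]; simp [mderiv, hcy]
  have hc2 : ∀ p, coeff p f2
      = ((m (p+1) / m p : ℝ) : ℂ) * (((m (p+2) / m (p+1) : ℝ) : ℂ) * (a (p+2) / (m (p+2) : ℂ))) := by
    intro p; rw [hf2]; simp [mderiv, hc1]
  have expand : 2 * ((X : PowerSeries ℂ) + 1) * f1 = C 2 * (f1 * X ^ 1) + C 2 * f1 := by
    rw [show (2 : PowerSeries ℂ) = C 2 from (map_ofNat C 2).symm]; ring
  have hX2 : (X : PowerSeries ℂ) ^ 2 * f2 = f2 * X ^ 2 := mul_comm _ _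
  have key : ∀ p, coeff p (f2 * X ^ 2) + (2 * coeff p (f1 * X ^ 1) + 2 * coeff p f1)
      - ((lamR : ℂ)) * coeff p y = 0 := by
    intro p
    have h := congrArg (coeff p) heq
    rw [hX2, expand] at h
    simpa [coeff_C_mul, two_mul, add_mul, mul_add, sub_eq_add_neg, add_assoc] using h
  -- first equation
  have g1 : a 1 = ((lamR / 2 : ℝ) : ℂ) * a 0 := by
    have h := key 0
    simp [coeff_mul_X_pow', hc1, hcy, hm0] at h
    push_cast
    field_simp [hmz 1] at h ⊢
    linear_combination h
  -- second equation
  have g2 : a 2 = ((lamR / 4 * (lamR - 2 * m 1) : ℝ) : ℂ) * a 0 := by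
    have h := key 1
    simp [coeff_mul_X_pow', hc1, hcy, hm0] at h
    push_cast at h ⊢
    rw [g1] at h
    push_cast at h
    field_simp [hmz 1, hmz 2] at h
    apply mul_left_cancel₀ (show (8 * (m 1 : ℂ) ^ 2 * (m 2 : ℂ)) ≠ 0 by
      simp [hmz 1, hmz 2])
    linear_combination 2 * (m 1 : ℂ)^2 * (m 2 : ℂ) * h
  -- recurrence
  have g3 : ∀ p, 2 ≤ p →
      a (p + 1) / (m (p + 1) : ℂ) =
        (((lamR - (m p / m (p - 1)) * (m (p - 1) / m (p - 2) + 2)) /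
          (2 * m (p + 1) / m p) : ℝ) : ℂ) * (a p / (m p : ℂ)) := by
    intro p hp
    obtain ⟨k, rfl⟩ : ∃ k, p = k + 2 := ⟨p - 2, by omega⟩
    have h := key (k + 2)
    rw [coeff_mul_X_pow f2 2 k, show k + 2 = (k + 1) + 1 from rfl,
      coeff_mul_X_pow f1 1 (k + 1), hc2, hc1, hc1, hcy] at h
    simp only [show k + 2 - 1 = k + 1 from rfl, show k + 2 - 2 = k from rfl,
      show k + 2 + 1 = k + 3 from rfl, show k + 1 + 1 = k + 2 from rfl] at h ⊢
    push_cast at h ⊢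
    field_simp [hmz k, hmz (k+1), hmz (k+2), hmz (k+3)] at h ⊢
    have h' : 2 * (m k : ℂ) * (m (k+1) : ℂ) * (m (k+2) : ℂ) * (m (k+3) : ℂ) * a (k+3)
        + (m (k+1) : ℂ) * (m (k+2) : ℂ)^2 * (m (k+3) : ℂ) * a (k+2)
        + 2 * (m k : ℂ) * (m (k+2) : ℂ)^2 * (m (k+3) : ℂ) * a (k+2)
        - (lamR : ℂ) * (m k : ℂ) * (m (k+1) : ℂ) * (m (k+2) : ℂ) * (m (k+3) : ℂ) * a (k+2) = 0 := by
      apply mul_left_cancel₀ (show ((m (k+1) : ℂ) * (m (k+2) : ℂ)^2) ≠ 0 by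
        simp [hmz (k+1), hmz (k+2)])
      rw [mul_zero]
      linear_combination (m (k+1) : ℂ) * (m (k+2) : ℂ)^3 * (m (k+3) : ℂ) * h
    linear_combination h
  -- vanishing
  have czero : ∀ j, n + 1 ≤ j → a j / (m j : ℂ) = 0 := by
    intro j hj
    induction j, hj using Nat.le_induction with
    | base =>
      rw [g3 n hn, ← hlamR]
      simp only [sub_self, zero_div, Complex.ofReal_zero, zero_mul]
    | succ j hj ih =>
      rw [g3 j (by omega), ih, mul_zero]
  refine ⟨g1, g2, g3, fun j hj => ?_⟩
  have := czero j hj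
  rw [div_eq_zero_iff] at this
  exact this.resolve_right (hmz j)
end
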